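/- Let L be a set of s non-negative integers and let F be a family of subsets of [n] that is Sperner (no member contains another) and L-intersecting (the intersection of any two distinct members has size in L). Then |F| ≤ ∑_{i=0}^{s} C(n-1, i). -/

import Mathlib

open Finset

namespace Stmt0Aux

variable {n : ℕ}

/-- Indicator "monomial" of a set `S`: the function `Y ↦ [S ⊆ Y]`. -/
noncomputable def mu (S : Finset (Fin n)) : Finset (Fin n) → ℚ :=
  fun Y => if S ⊆ Y then 1 else 0

lemma mu_mul (S T : Finset (Fin n)) : mu S * mu T = mu (S ∪ T) := by
  funext Y
  simp only [mu, Pi.mul_apply, union_subset_iff]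
  by_cases h1 : S ⊆ Y <;> by_cases h2 : T ⊆ Y <;> simp [h1, h2]

lemma linfun_eq (A' : Finset (Fin n)) (r : ℚ) :
    (fun Y => ((A' ∩ Y).card : ℚ) + r) = r • mu (∅ : Finset (Fin n)) + ∑ k ∈ A', mu {k} := by
  funext Y
  simp only [Pi.add_apply, Pi.smul_apply, Finset.sum_apply, mu, smul_eq_mul]
  rw [if_pos (empty_subset Y)]
  have h : ∑ k ∈ A', (if ({k} : Finset (Fin n)) ⊆ Y then (1:ℚ) else 0)
      = ((A'.filter (· ∈ Y)).card : ℚ) := by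
    rw [Finset.sum_boole]
    simp [singleton_subset_iff]
  rw [h, filter_mem_eq_inter]
  ring

/-- Generators: monomials `mu S` with `S ⊆ A'` and `|S| ≤ t`. -/
def gens (A' : Finset (Fin n)) (t : ℕ) : Set (Finset (Fin n) → ℚ) :=
  {g | ∃ S : Finset (Fin n), S ⊆ A' ∧ S.card ≤ t ∧ g = mu S}

/-- A product of `|T|` linear factors lies in the span of monomials of degree `≤ |T|`. -/
lemma prod_mem_span (A' : Finset (Fin n)) (T : Finset ℕ) (r : ℕ → ℚ) :
    (fun Y => ∏ l ∈ T, (((A' ∩ Y).card : ℚ) + r l)) ∈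
      Submodule.span ℚ (gens A' T.card) := by
  induction T using Finset.induction_on with
  | empty =>
      have h : (fun Y => ∏ l ∈ (∅:Finset ℕ), (((A' ∩ Y).card : ℚ) + r l))
          = mu (∅ : Finset (Fin n)) := by
        funext Y; simp [mu]
      rw [h]
      exact Submodule.subset_span ⟨∅, empty_subset _, by simp, rfl⟩
  | insert a T ha ih =>
      have hcard : (insert a T).card = T.card + 1 := card_insert_of_notMem ha
      rw [hcard]
      have hfeq : (fun Y => ∏ l ∈ insert a T, (((A' ∩ Y).card : ℚ) + r l))
          = (fun Y => ((A' ∩ Y).card : ℚ) + r a) *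
            (fun Y => ∏ l ∈ T, (((A' ∩ Y).card : ℚ) + r l)) := by
        funext Y
        simp [prod_insert ha]
      rw [hfeq]
      have key : ∀ g ∈ gens A' T.card,
          (fun Y => ((A' ∩ Y).card : ℚ) + r a) * g ∈
            Submodule.span ℚ (gens A' (T.card + 1)) := by
        rintro g ⟨S, hS, hc, rfl⟩
        rw [linfun_eq, add_mul, smul_mul_assoc, mu_mul, Finset.sum_mul, empty_union]
        apply Submodule.add_mem
        · exact Submodule.smul_mem _ _
            (Submodule.subset_span ⟨S, hS, hc.trans (Nat.le_succ _), rfl⟩)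
        · apply Submodule.sum_mem
          intro k hk
          rw [mu_mul]
          refine Submodule.subset_span ⟨{k} ∪ S, ?_, ?_, rfl⟩
          · exact union_subset (singleton_subset_iff.mpr hk) hS
          · exact (card_union_le _ _).trans (by simp only [card_singleton]; omega)
      have := Submodule.span_induction (p := fun x _ =>
          (fun Y => ((A' ∩ Y).card : ℚ) + r a) * x ∈ Submodule.span ℚ (gens A' (T.card + 1)))
        (hx := ih) ?_ ?_ ?_ ?_
      · exact this
      · exact key
      · simp
      · intro x y _ _ hx hy
        rw [mul_add]; exact Submodule.add_mem _ hx hy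
      · intro c x _ hx
        rw [mul_smul_comm]; exact Submodule.smul_mem _ _ hx

/-- The polynomial attached to a member `A` of the family. -/
noncomputable def hfun (L : Finset ℕ) (e : Fin n) (A : Finset (Fin n)) :
    Finset (Fin n) → ℚ :=
  fun Y => ∏ l ∈ L.filter (· < A.card), (((A ∩ insert e Y).card : ℚ) - l)

lemma card_inter_insert (e : Fin n) (A Y : Finset (Fin n)) :
    (A ∩ insert e Y).card = ((A.erase e) ∩ Y).card + (if e ∈ A then 1 else 0) := by
  by_cases he : e ∈ A
  · have h1 : A ∩ insert e Y = insert e ((A.erase e) ∩ Y) := by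
      ext x
      simp only [mem_inter, mem_insert, mem_erase]
      constructor
      · rintro ⟨hxA, hx⟩
        rcases hx with rfl | hxy
        · exact Or.inl rfl
        · by_cases hxe : x = e
          · exact Or.inl hxe
          · exact Or.inr ⟨⟨hxe, hxA⟩, hxy⟩
      · rintro (rfl | ⟨⟨hxe, hxA⟩, hxy⟩)
        · exact ⟨he, Or.inl rfl⟩
        · exact ⟨hxA, Or.inr hxy⟩
    rw [h1, if_pos he, card_insert_of_notMem]
    simp [mem_inter]
  · have h1 : A ∩ insert e Y = (A.erase e) ∩ Y := by
      rw [erase_eq_of_notMem he]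
      ext x
      simp only [mem_inter, mem_insert]
      constructor
      · rintro ⟨hxA, rfl | hxy⟩
        · exact absurd hxA he
        · exact ⟨hxA, hxy⟩
      · rintro ⟨hxA, hxy⟩; exact ⟨hxA, Or.inr hxy⟩
    rw [h1, if_neg he]
    omega

lemma hfun_eq_prodform (L : Finset ℕ) (e : Fin n) (A : Finset (Fin n)) :
    hfun L e A = fun Y => ∏ l ∈ L.filter (· < A.card),
      (((A.erase e ∩ Y).card : ℚ) + ((if e ∈ A then (1:ℚ) else 0) - l)) := by
  funext Y
  unfold hfun
  apply Finset.prod_congr rfl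
  intro l _
  rw [card_inter_insert e A Y]
  by_cases he : e ∈ A <;> simp [he] <;> ring

lemma hfun_self_ne_zero (L : Finset ℕ) (e : Fin n) (A : Finset (Fin n)) :
    hfun L e A (A.erase e) ≠ 0 := by
  have hsub : A ⊆ insert e (A.erase e) := by
    intro x hx
    by_cases hxe : x = e
    · exact hxe ▸ mem_insert_self _ _
    · exact mem_insert_of_mem (mem_erase.mpr ⟨hxe, hx⟩)
  have h1 : A ∩ insert e (A.erase e) = A := inter_eq_left.mpr hsub
  unfold hfun
  rw [h1, Finset.prod_ne_zero_iff]
  intro l hl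
  have hl' : l < A.card := (mem_filter.mp hl).2
  have h2 : (l : ℚ) < (A.card : ℚ) := by exact_mod_cast hl'
  exact sub_ne_zero.mpr h2.ne'

lemma hfun_eval_zero (L : Finset ℕ) (e : Fin n) {A B : Finset (Fin n)}
    (hint : (A ∩ B).card ∈ L) (hns : ¬ A ⊆ B)
    (hcase : e ∈ B ∨ e ∉ A) :
    hfun L e A (B.erase e) = 0 := by
  have hlt : (A ∩ B).card < A.card := by
    apply card_lt_card
    refine ⟨inter_subset_left, fun h => hns (fun x hx => (mem_inter.mp (h hx)).2)⟩
  have h1 : A ∩ insert e (B.erase e) = A ∩ B := by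
    rcases hcase with he | he
    · rw [insert_erase he]
    · ext x
      simp only [mem_inter, mem_insert, mem_erase]
      constructor
      · rintro ⟨hxA, rfl | ⟨hxe, hxB⟩⟩
        · exact absurd hxA he
        · exact ⟨hxA, hxB⟩
      · rintro ⟨hxA, hxB⟩
        refine ⟨hxA, Or.inr ⟨fun h => he (h ▸ hxA), hxB⟩⟩
  unfold hfun
  rw [h1]
  apply Finset.prod_eq_zero (i := (A ∩ B).card)
  · exact mem_filter.mpr ⟨hint, hlt⟩
  · simp

end Stmt0Aux

open Stmt0Aux in
theorem stmt_0 (n s : ℕ) (L : Finset ℕ) (hL : L.card = s)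
    (F : Finset (Finset (Fin n)))
    (hSperner : ∀ A ∈ F, ∀ B ∈ F, A ≠ B → ¬ A ⊆ B)
    (hInt : ∀ A ∈ F, ∀ B ∈ F, A ≠ B → (A ∩ B).card ∈ L) :
    F.card ≤ ∑ i ∈ Finset.range (s + 1), (n - 1).choose i := by
  classical
  rcases Nat.eq_zero_or_pos n with hn | hn
  · subst hn
    have h1 : F.card ≤ 1 := by
      apply Finset.card_le_one.mpr
      intro a _ b _
      have ha : a = ∅ := Finset.eq_empty_of_forall_notMem (fun x => x.elim0)
      have hb : b = ∅ := Finset.eq_empty_of_forall_notMem (fun x => x.elim0)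
      rw [ha, hb]
    refine h1.trans ?_
    have := Finset.single_le_sum (f := fun i => (0 - 1).choose i)
      (fun i _ => Nat.zero_le _) (Finset.mem_range.mpr (Nat.succ_pos s))
    simpa using this
  · set e : Fin n := ⟨0, hn⟩ with he_def
    set 𝒮 : Finset (Finset (Fin n)) :=
      ((univ.erase e).powerset).filter (fun S => S.card ≤ s) with h𝒮_def
    set G : Finset (Finset (Fin n) → ℚ) := 𝒮.image mu with hG_def
    set W : Submodule ℚ (Finset (Fin n) → ℚ) := Submodule.span ℚ (↑G : Set _) with hW_def
    -- each hfun lies in W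
    have hmem : ∀ A ∈ F, hfun L e A ∈ W := by
      intro A _
      rw [hfun_eq_prodform]
      refine Submodule.span_mono ?_
        (prod_mem_span (A.erase e) (L.filter (· < A.card))
          (fun l => (if e ∈ A then (1:ℚ) else 0) - l))
      rintro g ⟨S, hS, hc, rfl⟩
      have hS𝒮 : S ∈ 𝒮 := by
        rw [h𝒮_def, mem_filter, mem_powerset]
        constructor
        · intro x hx
          exact mem_erase.mpr ⟨(mem_erase.mp (hS hx)).1, mem_univ x⟩
        · exact hc.trans ((card_filter_le L _).trans_eq hL)
      exact Finset.mem_coe.mpr (Finset.mem_image.mpr ⟨S, hS𝒮, rfl⟩)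
    -- linear independence of the hfun family
    have li : LinearIndependent ℚ (fun A : {x // x ∈ F} => hfun L e (A : Finset (Fin n))) := by
      rw [Fintype.linearIndependent_iff]
      intro g hg
      have hev : ∀ B : {x // x ∈ F},
          ∑ A : {x // x ∈ F}, g A * hfun L e (A : Finset (Fin n)) ((B : Finset (Fin n)).erase e)
            = 0 := by
        intro B
        have := congrFun hg ((B : Finset (Fin n)).erase e)
        simpa using this
      have key : ∀ B : {x // x ∈ F},
          (∀ A : {x // x ∈ F}, A ≠ B →
            g A * hfun L e (A : Finset (Fin n)) ((B : Finset (Fin n)).erase e) = 0) →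
          g B = 0 := by
        intro B hzero
        have h0 := hev B
        rw [Finset.sum_eq_single B (fun A _ hA => hzero A hA)
          (fun h => absurd (Finset.mem_univ B) h)] at h0
        exact (mul_eq_zero.mp h0).resolve_right (hfun_self_ne_zero L e _)
      have st1 : ∀ B : {x // x ∈ F}, e ∈ (B : Finset (Fin n)) → g B = 0 := by
        intro B heB
        refine key B (fun A hA => ?_)
        have hne : (A : Finset (Fin n)) ≠ (B : Finset (Fin n)) :=
          fun h => hA (Subtype.coe_injective h)
        rw [hfun_eval_zero L e (hInt _ A.2 _ B.2 hne) (hSperner _ A.2 _ B.2 hne) (Or.inl heB),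
          mul_zero]
      intro B
      by_cases heB : e ∈ (B : Finset (Fin n))
      · exact st1 B heB
      · refine key B (fun A hA => ?_)
        have hne : (A : Finset (Fin n)) ≠ (B : Finset (Fin n)) :=
          fun h => hA (Subtype.coe_injective h)
        by_cases heA : e ∈ (A : Finset (Fin n))
        · rw [st1 A heA, zero_mul]
        · rw [hfun_eval_zero L e (hInt _ A.2 _ B.2 hne) (hSperner _ A.2 _ B.2 hne) (Or.inr heA),
            mul_zero]
    -- package into the span and count dimensions
    let v' : {x // x ∈ F} → W := fun A => ⟨hfun L e (A : Finset (Fin n)), hmem _ A.2⟩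
    have li' : LinearIndependent ℚ v' := LinearIndependent.of_comp W.subtype li
    have b1 : Fintype.card {x // x ∈ F} ≤ Module.finrank ℚ W :=
      li'.fintype_card_le_finrank
    have b2 : Module.finrank ℚ W ≤ G.card := finrank_span_finset_le_card G
    have b3 : G.card ≤ 𝒮.card := card_image_le
    have b4 : 𝒮.card ≤ ∑ i ∈ Finset.range (s + 1), (n - 1).choose i := by
      have hsub : 𝒮 ⊆ (Finset.range (s + 1)).biUnion
          (fun i => Finset.powersetCard i (univ.erase e)) := by
        intro S hS
        rw [h𝒮_def, mem_filter, mem_powerset] at hS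
        exact Finset.mem_biUnion.mpr ⟨S.card, Finset.mem_range.mpr (Nat.lt_succ_of_le hS.2),
          Finset.mem_powersetCard.mpr ⟨hS.1, rfl⟩⟩
      have hcount : ((univ : Finset (Fin n)).erase e).card = n - 1 := by
        rw [card_erase_of_mem (mem_univ e), card_univ, Fintype.card_fin]
      calc 𝒮.card ≤ ((Finset.range (s + 1)).biUnion
          (fun i => Finset.powersetCard i (univ.erase e))).card := Finset.card_le_card hsub
        _ ≤ ∑ i ∈ Finset.range (s + 1), (Finset.powersetCard i (univ.erase e)).card :=
            Finset.card_biUnion_le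
        _ = ∑ i ∈ Finset.range (s + 1), (n - 1).choose i := by
            refine Finset.sum_congr rfl (fun i _ => ?_)
            rw [Finset.card_powersetCard, hcount]
    calc F.card = Fintype.card {x // x ∈ F} := (Fintype.card_coe F).symm
      _ ≤ Module.finrank ℚ W := b1
      _ ≤ G.card := b2
      _ ≤ 𝒮.card := b3
      _ ≤ _ := b4
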